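/- arXiv:0808.2145 — 2 statements merged into one kernel-verified Lean document; each statement's English description precedes it below -/
import Mathlib

section
/- Let m ≥ 0 be an integer and set λ = √(2m+1). Then there exist constants a > 0 and D > 0 such that the function u(r) = D r^m (a + r) e^{−r²/2} satisfies, for all r > 0, the radial eigenvalue equation −(1/(2r)) d/dr ( r du/dr ) + (m²/(2r²)) u(r) + (r²/2) u(r) + (λ/(√2 r)) u(r) = (m + 2) u(r). -/
/-- For `λ = √(2m+1)`, there are constants `a, D > 0` such that
`u(r) = D r^m (a + r) e^{-r²/2}` satisfies, for all `r > 0`, the radial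
eigenvalue equation
`-(1/(2r)) (r u')' + (m²/(2r²)) u + (r²/2) u + (λ/(√2 r)) u = (m+2) u`
of the relative-motion Hamiltonian of a two-electron parabolic quantum dot. -/
theorem radial_eigenfunction_two_electron_dot (m : ℕ) :
    ∃ a : ℝ, 0 < a ∧ ∃ D : ℝ, 0 < D ∧
      ∀ r : ℝ, 0 < r →
        -(1 / (2 * r)) *
            deriv (fun s : ℝ =>
              s * deriv (fun t : ℝ => D * t ^ m * (a + t) * Real.exp (-t ^ 2 / 2)) s) r
          + ((m : ℝ) ^ 2 / (2 * r ^ 2)) * (D * r ^ m * (a + r) * Real.exp (-r ^ 2 / 2))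
          + (r ^ 2 / 2) * (D * r ^ m * (a + r) * Real.exp (-r ^ 2 / 2))
          + (Real.sqrt (2 * (m : ℝ) + 1) / (Real.sqrt 2 * r)) *
              (D * r ^ m * (a + r) * Real.exp (-r ^ 2 / 2))
        = ((m : ℝ) + 2) * (D * r ^ m * (a + r) * Real.exp (-r ^ 2 / 2)) := by
  have h2m : (0:ℝ) < 2 * (m:ℝ) + 1 := by positivity
  set a : ℝ := Real.sqrt (2 * (m:ℝ) + 1) / Real.sqrt 2 with ha_def
  have hsqrt2 : (0:ℝ) < Real.sqrt 2 := Real.sqrt_pos.mpr (by norm_num)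
  have ha : 0 < a := div_pos (Real.sqrt_pos.mpr h2m) hsqrt2
  have hsq : Real.sqrt (2 * (m:ℝ) + 1) = Real.sqrt 2 * a := by
    rw [ha_def]
    field_simp [hsqrt2.ne']
  have ha2 : a ^ 2 * 2 = 2 * (m:ℝ) + 1 := by
    rw [ha_def, div_pow, Real.sq_sqrt h2m.le, Real.sq_sqrt (by norm_num : (0:ℝ) ≤ 2)]
    field_simp
  clear_value a
  clear ha_def
  refine ⟨a, ha, 1, one_pos, fun r hr => ?_⟩
  have hrne : r ≠ 0 := ne_of_gt hr
  -- derivative of the exponential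
  have hE : ∀ s : ℝ, HasDerivAt (fun t : ℝ => Real.exp (-t ^ 2 / 2))
      (Real.exp (-s ^ 2 / 2) * (-s)) s := by
    intro s
    have h1 : HasDerivAt (fun t : ℝ => -t ^ 2 / 2) (-s) s := by
      have := ((hasDerivAt_pow 2 s).neg).div_const 2
      refine this.congr_deriv ?_
      symm; simp; ring
    simpa using h1.exp
  -- first derivative of u
  have hu : ∀ s : ℝ, HasDerivAt (fun t : ℝ => 1 * t ^ m * (a + t) * Real.exp (-t ^ 2 / 2))
      (((1 * ((m:ℝ) * s ^ (m - 1)) * (a + s) + 1 * s ^ m * 1) * Real.exp (-s ^ 2 / 2)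
        + 1 * s ^ m * (a + s) * (Real.exp (-s ^ 2 / 2) * (-s)))) s := by
    intro s
    have h1 : HasDerivAt (fun t : ℝ => 1 * t ^ m) (1 * ((m:ℝ) * s ^ (m - 1))) s :=
      (hasDerivAt_pow m s).const_mul 1
    have h2 : HasDerivAt (fun t : ℝ => a + t) 1 s := by
      simpa using (hasDerivAt_id s).const_add a
    exact ((h1.mul h2).mul (hE s))
  have hd : (deriv fun t : ℝ => 1 * t ^ m * (a + t) * Real.exp (-t ^ 2 / 2))
      = fun s : ℝ => ((1 * ((m:ℝ) * s ^ (m - 1)) * (a + s) + 1 * s ^ m * 1) * Real.exp (-s ^ 2 / 2)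
        + 1 * s ^ m * (a + s) * (Real.exp (-s ^ 2 / 2) * (-s))) :=
    funext fun s => (hu s).deriv
  simp only [hd]
  -- replace s * u'(s) by a subtraction-free form near r
  have key : ∀ s : ℝ, s ≠ 0 → (m:ℝ) * s ^ (m - 1) * s = (m:ℝ) * s ^ m := by
    intro s hs
    cases m with
    | zero => simp
    | succ k =>
      have : s ^ (k + 1 - 1) * s = s ^ (k + 1) := by
        simp [pow_succ]
      push_cast
      calc ((k:ℝ) + 1) * s ^ (k + 1 - 1) * s = ((k:ℝ) + 1) * (s ^ (k + 1 - 1) * s) := by ring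
        _ = ((k:ℝ) + 1) * s ^ (k + 1) := by rw [this]
  have heq : (fun s : ℝ => s * ((1 * ((m:ℝ) * s ^ (m - 1)) * (a + s) + 1 * s ^ m * 1)
        * Real.exp (-s ^ 2 / 2)
        + 1 * s ^ m * (a + s) * (Real.exp (-s ^ 2 / 2) * (-s))))
      =ᶠ[nhds r] (fun s : ℝ =>
        ((a * (m:ℝ) * s ^ m + ((m:ℝ) + 1) * s ^ (m + 1)) * Real.exp (-s ^ 2 / 2)
          + (a * s ^ (m + 1) + s ^ (m + 2)) * (Real.exp (-s ^ 2 / 2) * (-s)))) := by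
    filter_upwards [eventually_gt_nhds hr] with s hs
    have hk := key s (ne_of_gt hs)
    have : s * (1 * ((m:ℝ) * s ^ (m - 1)) * (a + s)) = (m:ℝ) * s ^ (m-1) * s * (a + s) := by ring
    calc s * ((1 * ((m:ℝ) * s ^ (m - 1)) * (a + s) + 1 * s ^ m * 1) * Real.exp (-s ^ 2 / 2)
            + 1 * s ^ m * (a + s) * (Real.exp (-s ^ 2 / 2) * (-s)))
        = ((m:ℝ) * s ^ (m-1) * s * (a + s) + s * s ^ m) * Real.exp (-s ^ 2 / 2)
            + (s * s ^ m * (a + s)) * (Real.exp (-s ^ 2 / 2) * (-s)) := by ring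
      _ = ((m:ℝ) * s ^ m * (a + s) + s ^ (m+1)) * Real.exp (-s ^ 2 / 2)
            + (s ^ (m+1) * (a + s)) * (Real.exp (-s ^ 2 / 2) * (-s)) := by
            rw [hk]; simp only [pow_succ]; ring
      _ = (a * (m:ℝ) * s ^ m + ((m:ℝ) + 1) * s ^ (m + 1)) * Real.exp (-s ^ 2 / 2)
            + (a * s ^ (m + 1) + s ^ (m + 2)) * (Real.exp (-s ^ 2 / 2) * (-s)) := by
            simp only [pow_succ]; ring
  rw [Filter.EventuallyEq.deriv_eq heq]
  -- differentiate W
  have hE2 : HasDerivAt (fun s : ℝ => Real.exp (-s ^ 2 / 2) * (-s))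
      ((Real.exp (-r ^ 2 / 2) * (-r)) * (-r) + Real.exp (-r ^ 2 / 2) * (-1)) r :=
    (hE r).mul ((hasDerivAt_id r).neg)
  have hW : HasDerivAt (fun s : ℝ =>
      ((a * (m:ℝ) * s ^ m + ((m:ℝ) + 1) * s ^ (m + 1)) * Real.exp (-s ^ 2 / 2)
        + (a * s ^ (m + 1) + s ^ (m + 2)) * (Real.exp (-s ^ 2 / 2) * (-s))))
      (((a * (m:ℝ) * ((m:ℝ) * r ^ (m - 1)) + ((m:ℝ) + 1) * (((m:ℝ) + 1) * r ^ m))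
          * Real.exp (-r ^ 2 / 2)
        + (a * (m:ℝ) * r ^ m + ((m:ℝ) + 1) * r ^ (m + 1)) * (Real.exp (-r ^ 2 / 2) * (-r)))
       + ((a * (((m:ℝ) + 1) * r ^ m) + ((m:ℝ) + 2) * r ^ (m + 1))
          * (Real.exp (-r ^ 2 / 2) * (-r))
        + (a * r ^ (m + 1) + r ^ (m + 2))
          * ((Real.exp (-r ^ 2 / 2) * (-r)) * (-r) + Real.exp (-r ^ 2 / 2) * (-1)))) r := by
    have p1 : HasDerivAt (fun s : ℝ => a * (m:ℝ) * s ^ m + ((m:ℝ) + 1) * s ^ (m + 1))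
        (a * (m:ℝ) * ((m:ℝ) * r ^ (m - 1)) + ((m:ℝ) + 1) * (((m:ℝ) + 1) * r ^ m)) r := by
      have q1 := (hasDerivAt_pow m r).const_mul (a * (m:ℝ))
      have q2 := (hasDerivAt_pow (m + 1) r).const_mul ((m:ℝ) + 1)
      have := q1.add q2
      refine this.congr_deriv ?_
      symm; push_cast; ring_nf
    have p2 : HasDerivAt (fun s : ℝ => a * s ^ (m + 1) + s ^ (m + 2))
        (a * (((m:ℝ) + 1) * r ^ m) + ((m:ℝ) + 2) * r ^ (m + 1)) r := by
      have q1 := (hasDerivAt_pow (m + 1) r).const_mul a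
      have q2 := hasDerivAt_pow (m + 2) r
      have := q1.add q2
      refine this.congr_deriv ?_
      symm; push_cast; ring_nf
    exact (p1.mul (hE r)).add (p2.mul hE2)
  rw [hW.deriv]
  -- final algebraic identity
  have e1 : (m:ℝ) * r ^ (m - 1) = (m:ℝ) * r ^ m / r := by
    rw [eq_div_iff hrne]
    exact key r hrne
  rw [hsq, e1]
  have hexp : Real.exp (-r ^ 2 / 2) ≠ 0 := Real.exp_ne_zero _
  field_simp
  ring_nf
  linear_combination (r * r ^ m) * ha2
end

section
/- Consider the two-electron parabolic quantum dot Hamiltonian in two dimensions with λ = 1: H = −½(Δ₁ + Δ₂) + ½(‖r₁‖² + ‖r₂‖²) + 1/‖r₁ − r₂‖ acting on functions of (r₁, r₂) ∈ ℝ² × ℝ². Then there exist constants a > 0 and D > 0 such that Ψ₀(r₁, r₂) = D (‖r₁ − r₂‖ + √2 a) e^{−(‖r₁‖² + ‖r₂‖²)/2} satisfies HΨ₀ = 3Ψ₀ at every point with r₁ ≠ r₂. -/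
open MeasureTheory

/-- Points of the plane, with the Euclidean norm. -/
abbrev Plane := EuclideanSpace ℝ (Fin 2)

/-- The candidate two-electron ground state
`Ψ₀(r₁,r₂) = D (‖r₁-r₂‖ + √2 a) e^{-(‖r₁‖²+‖r₂‖²)/2}`. -/
noncomputable def Psi0 (a D : ℝ) (p : Plane × Plane) : ℝ :=
  D * (‖p.1 - p.2‖ + Real.sqrt 2 * a) * Real.exp (-(‖p.1‖ ^ 2 + ‖p.2‖ ^ 2) / 2)

/-- Laplacian `Δ₁` with respect to the first particle's coordinates:
the sum of the second derivatives along the coordinate directions of `r₁`. -/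
noncomputable def lap1 (f : Plane × Plane → ℝ) (p : Plane × Plane) : ℝ :=
  ∑ i : Fin 2,
    iteratedDeriv 2 (fun t : ℝ => f (p.1 + t • EuclideanSpace.single i (1 : ℝ), p.2)) 0

/-- Laplacian `Δ₂` with respect to the second particle's coordinates. -/
noncomputable def lap2 (f : Plane × Plane → ℝ) (p : Plane × Plane) : ℝ :=
  ∑ i : Fin 2,
    iteratedDeriv 2 (fun t : ℝ => f (p.1, p.2 + t • EuclideanSpace.single i (1 : ℝ))) 0

/- ### Auxiliary lemmas -/

lemma norm_sq_plane (v : Plane) : ‖v‖ ^ 2 = v 0 ^ 2 + v 1 ^ 2 := by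
  rw [EuclideanSpace.norm_eq, Real.sq_sqrt (by positivity)]
  simp [Fin.sum_univ_two, sq_abs]

lemma sub_apply_plane (v w : Plane) (i : Fin 2) : (v - w) i = v i - w i := rfl

lemma norm_add_single_sq (v : Plane) (i : Fin 2) (t : ℝ) :
    ‖v + t • EuclideanSpace.single i (1 : ℝ)‖ ^ 2 = ‖v‖ ^ 2 + 2 * v i * t + t ^ 2 := by
  rw [norm_add_sq_real]
  have h1 : (inner ℝ v (t • EuclideanSpace.single i (1 : ℝ)) : ℝ) = t * v i := by
    rw [real_inner_smul_right]
    rw [EuclideanSpace.inner_single_right]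
    simp
  have h2 : ‖t • EuclideanSpace.single i (1 : ℝ)‖ ^ 2 = t ^ 2 := by
    rw [norm_smul]
    simp [sq_abs]
  rw [h1, h2]; ring

lemma norm_add_single (v : Plane) (i : Fin 2) (t : ℝ) :
    ‖v + t • EuclideanSpace.single i (1 : ℝ)‖ =
      Real.sqrt (‖v‖ ^ 2 + 2 * v i * t + t ^ 2) := by
  rw [← norm_add_single_sq v i t, Real.sqrt_sq (norm_nonneg _)]

lemma second_deriv_key (A b C x D : ℝ) (hA : 0 < A) :
    iteratedDeriv 2
      (fun t : ℝ => D * (Real.sqrt (A + 2 * b * t + t ^ 2) + 1) *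
        Real.exp (-(C + 2 * x * t + t ^ 2) / 2)) 0
    = D * Real.exp (-C / 2) *
        ((A - b ^ 2) / (A * Real.sqrt A) - 2 * b * x / Real.sqrt A
          + (Real.sqrt A + 1) * (x ^ 2 - 1)) := by
  have hs0 : 0 < Real.sqrt A := Real.sqrt_pos.mpr hA
  have hs2 : Real.sqrt A ^ 2 = A := Real.sq_sqrt hA.le
  have hq : ∀ t : ℝ, HasDerivAt (fun u : ℝ => A + 2 * b * u + u ^ 2) (2 * b + 2 * t) t := by
    intro t
    have h1 : HasDerivAt (fun u : ℝ => 2 * b * u) (2 * b) t := by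
      simpa using (hasDerivAt_id t).const_mul (2 * b)
    have h2 : HasDerivAt (fun u : ℝ => u ^ 2) (2 * t) t := by
      simpa using hasDerivAt_pow 2 t
    exact (h1.const_add A).add h2
  have hE : ∀ t : ℝ, HasDerivAt (fun u : ℝ => Real.exp (-(C + 2 * x * u + u ^ 2) / 2))
      (-(x + t) * Real.exp (-(C + 2 * x * t + t ^ 2) / 2)) t := by
    intro t
    have hx1 : HasDerivAt (fun u : ℝ => 2 * x * u) (2 * x) t := by
      simpa using (hasDerivAt_id t).const_mul (2 * x)
    have hx2 : HasDerivAt (fun u : ℝ => u ^ 2) (2 * t) t := by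
      simpa using hasDerivAt_pow 2 t
    have h1 : HasDerivAt (fun u : ℝ => -(C + 2 * x * u + u ^ 2) / 2) (-(x + t)) t := by
      have := (((hx1.const_add C).add hx2).neg).div_const 2
      exact this.congr_deriv (by ring)
    have := h1.exp
    convert this using 1
    ring
  have hsq : ∀ t : ℝ, 0 < A + 2 * b * t + t ^ 2 →
      HasDerivAt (fun u : ℝ => Real.sqrt (A + 2 * b * u + u ^ 2))
        ((b + t) / Real.sqrt (A + 2 * b * t + t ^ 2)) t := by
    intro t ht
    have h0 : Real.sqrt (A + 2 * b * t + t ^ 2) ≠ 0 := (Real.sqrt_pos.mpr ht).ne'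
    have := (Real.hasDerivAt_sqrt ht.ne').comp t (hq t)
    exact this.congr_deriv (by field_simp)
  set g1 : ℝ → ℝ := fun t => D * (((b + t) / Real.sqrt (A + 2 * b * t + t ^ 2)
      - (Real.sqrt (A + 2 * b * t + t ^ 2) + 1) * (x + t))
      * Real.exp (-(C + 2 * x * t + t ^ 2) / 2)) with hg1def
  have hg : ∀ t : ℝ, 0 < A + 2 * b * t + t ^ 2 →
      HasDerivAt (fun u : ℝ => D * (Real.sqrt (A + 2 * b * u + u ^ 2) + 1) *
        Real.exp (-(C + 2 * x * u + u ^ 2) / 2)) (g1 t) t := by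
    intro t ht
    have h1 := (((hsq t ht).add_const 1).mul (hE t)).const_mul D
    have hfun : (fun u : ℝ => D * (Real.sqrt (A + 2 * b * u + u ^ 2) + 1) *
        Real.exp (-(C + 2 * x * u + u ^ 2) / 2))
        = fun u : ℝ => D * ((Real.sqrt (A + 2 * b * u + u ^ 2) + 1) *
          Real.exp (-(C + 2 * x * u + u ^ 2) / 2)) := by
      funext u; ring
    rw [hfun]
    exact h1.congr_deriv (by simp only [hg1def]; ring)
  have hcont : Continuous fun t : ℝ => A + 2 * b * t + t ^ 2 := by continuity
  have hev : ∀ᶠ t in nhds (0 : ℝ), 0 < A + 2 * b * t + t ^ 2 := by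
    have hop : IsOpen {t : ℝ | 0 < A + 2 * b * t + t ^ 2} :=
      isOpen_lt continuous_const hcont
    filter_upwards [hop.mem_nhds (by simpa using hA)] with t ht using ht
  have hd : deriv (fun t : ℝ => D * (Real.sqrt (A + 2 * b * t + t ^ 2) + 1) *
      Real.exp (-(C + 2 * x * t + t ^ 2) / 2)) =ᶠ[nhds (0 : ℝ)] g1 := by
    filter_upwards [hev] with t ht using (hg t ht).deriv
  rw [iteratedDeriv_succ, iteratedDeriv_one, hd.deriv_eq]
  have hA0 : (0:ℝ) < A + 2 * b * 0 + 0 ^ 2 := by simpa using hA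
  have hs00 : HasDerivAt (fun u : ℝ => Real.sqrt (A + 2 * b * u + u ^ 2))
      (b / Real.sqrt A) 0 := by
    have := hsq 0 hA0
    simpa using this
  have hne : (fun u : ℝ => Real.sqrt (A + 2 * b * u + u ^ 2)) 0 ≠ 0 := by
    simpa using hs0.ne'
  have hb : HasDerivAt (fun u : ℝ => b + u) 1 0 := by
    simpa using (hasDerivAt_id (0:ℝ)).const_add b
  have hxid : HasDerivAt (fun u : ℝ => x + u) 1 0 := by
    simpa using (hasDerivAt_id (0:ℝ)).const_add x
  have hF := hb.div hs00 hne
  have hH := (hs00.add_const 1).mul hxid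
  have hval := ((hF.sub hH).mul (hE 0)).const_mul D
  have hval' : HasDerivAt g1 _ 0 := hval
  rw [hval'.deriv]
  norm_num
  rw [← hs2]
  have hsne : Real.sqrt A ≠ 0 := hs0.ne'
  field_simp
  rw [Real.sqrt_sq hs0.le]
  ring

/-- For the two-electron parabolic quantum dot in two dimensions with `λ = 1`,
there are constants `a, D > 0` such that
`Ψ₀(r₁,r₂) = D (‖r₁-r₂‖ + √2 a) e^{-(‖r₁‖²+‖r₂‖²)/2}` satisfies
`HΨ₀ = 3Ψ₀` pointwise at every point with `r₁ ≠ r₂`, where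
`H = -½(Δ₁+Δ₂) + ½(‖r₁‖²+‖r₂‖²) + 1/‖r₁-r₂‖`. -/
theorem two_electron_ground_state_lambda_one :
    ∃ a : ℝ, 0 < a ∧ ∃ D : ℝ, 0 < D ∧
      ∀ p : Plane × Plane, p.1 ≠ p.2 →
        -(1 / 2) * (lap1 (Psi0 a D) p + lap2 (Psi0 a D) p)
          + (1 / 2) * (‖p.1‖ ^ 2 + ‖p.2‖ ^ 2) * Psi0 a D p
          + Psi0 a D p / ‖p.1 - p.2‖
        = 3 * Psi0 a D p := by
  refine ⟨Real.sqrt 2 / 2, by positivity, 1, one_pos, ?_⟩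
  set a : ℝ := Real.sqrt 2 / 2 with hadef
  have hsa : Real.sqrt 2 * a = 1 := by
    rw [hadef]
    rw [show Real.sqrt 2 * (Real.sqrt 2 / 2) = Real.sqrt 2 * Real.sqrt 2 / 2 by ring]
    rw [Real.mul_self_sqrt (by norm_num)]
    norm_num
  intro p hp
  have hr : (0:ℝ) < ‖p.1 - p.2‖ := norm_pos_iff.mpr (sub_ne_zero.mpr hp)
  have hA : (0:ℝ) < ‖p.1 - p.2‖ ^ 2 := by positivity
  have hsr : Real.sqrt (‖p.1 - p.2‖ ^ 2) = ‖p.1 - p.2‖ := Real.sqrt_sq (norm_nonneg _)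
  -- lap1 computation
  have hl1 : lap1 (Psi0 a 1) p = ∑ i : Fin 2,
      (1 * Real.exp (-(‖p.1‖ ^ 2 + ‖p.2‖ ^ 2) / 2) *
        ((‖p.1 - p.2‖ ^ 2 - ((p.1 - p.2) i) ^ 2) / (‖p.1 - p.2‖ ^ 2 * ‖p.1 - p.2‖)
          - 2 * ((p.1 - p.2) i) * (p.1 i) / ‖p.1 - p.2‖
          + (‖p.1 - p.2‖ + 1) * ((p.1 i) ^ 2 - 1))) := by
    unfold lap1
    refine Finset.sum_congr rfl fun i _ => ?_
    have hfun : (fun t : ℝ => Psi0 a 1 (p.1 + t • EuclideanSpace.single i (1:ℝ), p.2))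
        = fun t : ℝ => 1 * (Real.sqrt (‖p.1 - p.2‖ ^ 2 + 2 * ((p.1 - p.2) i) * t + t ^ 2) + 1) *
            Real.exp (-((‖p.1‖ ^ 2 + ‖p.2‖ ^ 2) + 2 * (p.1 i) * t + t ^ 2) / 2) := by
      funext t
      simp only [Psi0]
      rw [hsa]
      have e1 : p.1 + t • EuclideanSpace.single i (1:ℝ) - p.2
          = (p.1 - p.2) + t • EuclideanSpace.single i (1:ℝ) := by abel
      rw [e1, norm_add_single, norm_add_single_sq]
      congr 1
      rw [Real.exp_eq_exp]
      ring
    rw [hfun, second_deriv_key _ _ _ _ _ hA, hsr]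
  -- lap2 computation
  have hl2 : lap2 (Psi0 a 1) p = ∑ i : Fin 2,
      (1 * Real.exp (-(‖p.1‖ ^ 2 + ‖p.2‖ ^ 2) / 2) *
        ((‖p.1 - p.2‖ ^ 2 - ((p.2 - p.1) i) ^ 2) / (‖p.1 - p.2‖ ^ 2 * ‖p.1 - p.2‖)
          - 2 * ((p.2 - p.1) i) * (p.2 i) / ‖p.1 - p.2‖
          + (‖p.1 - p.2‖ + 1) * ((p.2 i) ^ 2 - 1))) := by
    unfold lap2
    refine Finset.sum_congr rfl fun i _ => ?_
    have hfun : (fun t : ℝ => Psi0 a 1 (p.1, p.2 + t • EuclideanSpace.single i (1:ℝ)))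
        = fun t : ℝ => 1 * (Real.sqrt (‖p.1 - p.2‖ ^ 2 + 2 * ((p.2 - p.1) i) * t + t ^ 2) + 1) *
            Real.exp (-((‖p.1‖ ^ 2 + ‖p.2‖ ^ 2) + 2 * (p.2 i) * t + t ^ 2) / 2) := by
      funext t
      simp only [Psi0]
      rw [hsa]
      have e1 : p.1 - (p.2 + t • EuclideanSpace.single i (1:ℝ))
          = -((p.2 - p.1) + t • EuclideanSpace.single i (1:ℝ)) := by abel
      rw [e1, norm_neg, norm_add_single, norm_add_single_sq,
        show ‖p.2 - p.1‖ = ‖p.1 - p.2‖ from norm_sub_rev _ _]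
      congr 1
      rw [Real.exp_eq_exp]
      ring
    rw [hfun, second_deriv_key _ _ _ _ _ hA, hsr]
  rw [hl1, hl2]
  simp only [Fin.sum_univ_two, sub_apply_plane, Psi0, hsa]
  have hn1 : ‖p.1‖ ^ 2 = p.1 0 ^ 2 + p.1 1 ^ 2 := norm_sq_plane p.1
  have hn2 : ‖p.2‖ ^ 2 = p.2 0 ^ 2 + p.2 1 ^ 2 := norm_sq_plane p.2
  have hr2 : (p.1 0 - p.2 0) ^ 2 + (p.1 1 - p.2 1) ^ 2 = ‖p.1 - p.2‖ ^ 2 := by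
    rw [norm_sq_plane (p.1 - p.2), sub_apply_plane, sub_apply_plane]
  rw [hn1, hn2]
  have hrne : ‖p.1 - p.2‖ ≠ 0 := hr.ne'
  generalize Real.exp (-(p.1 0 ^ 2 + p.1 1 ^ 2 + (p.2 0 ^ 2 + p.2 1 ^ 2)) / 2) = E
  field_simp
  linear_combination (2 * E * (‖p.1 - p.2‖ ^ 2 + 1)) * hr2
end
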